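/- arXiv:1108.2745 — 3 statements merged into one kernel-verified Lean document; each statement's English description precedes it below -/
import Mathlib

section
/- For H in (0,1)∪(1,2) and s,t ≥ 0, one has (1-H)(s^{2H} + t^{2H} - (1/2)((s+t)^{2H} + |t-s|^{2H})) = C(H) ∫_ℝ (1-cos(sx))(1-cos(tx)) / |x|^{1+2H} dx, where C(H) is a positive constant depending only on H. -/
open MeasureTheory Real Set

lemma dom_integrable {p : ℝ} (hp1 : 1 < p) (hp5 : p < 5) :
    Integrable (fun x : ℝ => min (x ^ 4) 1 / |x| ^ p) := by
  have hmeas : Measurable (fun x : ℝ => min (x ^ 4) 1 / |x| ^ p) := by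
    fun_prop
  have hnonneg : ∀ x : ℝ, 0 ≤ min (x ^ 4) 1 / |x| ^ p := fun x => by
    apply div_nonneg _ (by positivity)
    exact le_min (by positivity) zero_le_one |>.trans' le_rfl
  -- middle part
  have habs : IntegrableOn (fun x : ℝ => |x| ^ (4 - p)) (Icc (-1 : ℝ) 1) := by
    have h01 : IntegrableOn (fun x : ℝ => |x| ^ (4 - p)) (Icc 0 1) := by
      have h := intervalIntegral.intervalIntegrable_rpow' (a := 0) (b := 1)
        (r := 4 - p) (by linarith)
      rw [intervalIntegrable_iff_integrableOn_Icc_of_le zero_le_one] at h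
      exact h.congr_fun (fun x hx => by rw [abs_of_nonneg hx.1]) measurableSet_Icc
    have hneg : IntegrableOn (fun x : ℝ => |x| ^ (4 - p)) (Icc (-1 : ℝ) 0) := by
      rw [← (Measure.measurePreserving_neg (volume : Measure ℝ)).integrableOn_comp_preimage
          (Homeomorph.neg ℝ).measurableEmbedding]
      simp only [Function.comp_def, abs_neg, neg_preimage, neg_Icc, neg_neg, neg_zero]
      exact h01
    have := hneg.union h01
    rwa [Icc_union_Icc_eq_Icc (by norm_num) (by norm_num)] at this
  have hmid : IntegrableOn (fun x : ℝ => min (x ^ 4) 1 / |x| ^ p) (Icc (-1 : ℝ) 1) := by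
    refine habs.mono' hmeas.aestronglyMeasurable.restrict ?_
    filter_upwards with x
    rw [Real.norm_eq_abs, abs_of_nonneg (hnonneg x)]
    rcases eq_or_ne x 0 with rfl | hx
    · simpa using Real.rpow_nonneg le_rfl _
    · have h1 : (0:ℝ) < |x| := abs_pos.mpr hx
      rw [div_le_iff₀ (by positivity)]
      calc min (x ^ 4) 1 ≤ x ^ 4 := min_le_left _ _
        _ = |x| ^ (4:ℕ) := by rw [← abs_pow, abs_of_nonneg (by positivity)]
        _ = |x| ^ (4:ℝ) := by rw [← Real.rpow_natCast]; norm_num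
        _ = |x| ^ (4 - p) * |x| ^ p := by rw [← Real.rpow_add h1]; ring_nf
  -- right tail
  have hright : IntegrableOn (fun x : ℝ => min (x ^ 4) 1 / |x| ^ p) (Ioi (1:ℝ)) := by
    refine ((integrableOn_Ioi_rpow_of_lt (by linarith : -p < -1) one_pos).congr_fun
      (fun x hx => ?_) measurableSet_Ioi)
    have hx1 : (1:ℝ) < x := hx
    beta_reduce
    rw [min_eq_right (one_le_pow₀ hx1.le : (1:ℝ) ≤ x ^ 4) , abs_of_pos (by linarith),
      Real.rpow_neg (by linarith), div_eq_mul_inv, one_mul]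
  have hleft : IntegrableOn (fun x : ℝ => min (x ^ 4) 1 / |x| ^ p) (Iio (-1:ℝ)) := by
    rw [← (Measure.measurePreserving_neg (volume : Measure ℝ)).integrableOn_comp_preimage
        (Homeomorph.neg ℝ).measurableEmbedding]
    simp only [Function.comp_def, abs_neg, neg_preimage, neg_Iio, neg_neg]
    refine hright.congr_fun (fun x _ => by rw [Even.neg_pow (⟨2, rfl⟩ : Even 4)]) measurableSet_Ioi
  have hcover : (univ : Set ℝ) ⊆ Iio (-1) ∪ (Icc (-1) 1 ∪ Ioi 1) := by
    intro x _
    rcases lt_or_ge x (-1) with h | h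
    · exact Or.inl h
    rcases le_or_gt x 1 with h2 | h2
    · exact Or.inr (Or.inl ⟨h, h2⟩)
    · exact Or.inr (Or.inr h2)
  have := (hleft.union (hmid.union hright)).mono_set hcover
  rwa [integrableOn_univ] at this

noncomputable def nmr (a x : ℝ) : ℝ := 1 - Real.cos (a * x) - a ^ 2 * (1 - Real.cos x)

lemma nmr_bound (a : ℝ) : ∀ x : ℝ,
    |nmr a x| ≤ ((2 + 2 * a ^ 2) * (max |a| 1) ^ 4 + 5 / 96 * (a ^ 4 + a ^ 2)) * min (x ^ 4) 1 := by
  intro x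
  set b : ℝ := max |a| 1 with hb
  have hb1 : (1:ℝ) ≤ b := le_max_right _ _
  have hab : |a| ≤ b := le_max_left _ _
  have hb0 : (0:ℝ) < b := by linarith
  have hmin0 : 0 ≤ min (x ^ 4) 1 := le_min (by positivity) zero_le_one
  rcases le_or_gt (b * |x|) 1 with hsmall | hlarge
  · -- small regime
    have hx1 : |x| ≤ 1 := by
      nlinarith [abs_nonneg x]
    have hax : |a * x| ≤ 1 := by
      rw [abs_mul]; nlinarith [abs_nonneg x, abs_nonneg a]
    have h1 := Real.cos_bound hax
    have h2 := Real.cos_bound hx1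
    have hmin : min (x ^ 4) 1 = x ^ 4 := min_eq_left (by
      calc x ^ 4 ≤ |x ^ 4| := le_abs_self _
        _ = |x| ^ 4 := abs_pow x 4
        _ ≤ 1 := pow_le_one₀ (abs_nonneg x) hx1)
    have key : |nmr a x| ≤ 5 / 96 * (a ^ 4 + a ^ 2) * x ^ 4 := by
      have e1 : nmr a x = -(Real.cos (a*x) - (1 - (a*x) ^ 2 / 2))
          + a ^ 2 * (Real.cos x - (1 - x ^ 2 / 2)) := by
        simp only [nmr]; ring
      rw [e1]
      have hxabs : |x| ^ 4 = x ^ 4 := by rw [← abs_pow, abs_of_nonneg (by positivity)]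
      have haxabs : |a * x| ^ 4 = a ^ 4 * x ^ 4 := by
        rw [← abs_pow, abs_of_nonneg (by positivity)]; ring
      calc |(-(Real.cos (a*x) - (1 - (a*x) ^ 2 / 2)) + a ^ 2 * (Real.cos x - (1 - x ^ 2 / 2)))|
          ≤ |Real.cos (a*x) - (1 - (a*x) ^ 2 / 2)| + a ^ 2 * |Real.cos x - (1 - x ^ 2 / 2)| := by
            refine (abs_add_le _ _).trans ?_
            rw [abs_neg, abs_mul, abs_of_nonneg (sq_nonneg a)]
        _ ≤ |a*x| ^ 4 * (5/96) + a ^ 2 * (|x| ^ 4 * (5/96)) :=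
            add_le_add h1 (mul_le_mul_of_nonneg_left h2 (sq_nonneg a))
        _ = 5 / 96 * (a ^ 4 + a ^ 2) * x ^ 4 := by rw [hxabs, haxabs]; ring
    rw [hmin]
    have hpos : 0 ≤ (2 + 2 * a ^ 2) * b ^ 4 * x ^ 4 := by positivity
    nlinarith [key]
  · -- large regime
    have hbm : b ^ 4 * min (x ^ 4) 1 ≥ 1 := by
      have hx4 : (1:ℝ) ≤ b ^ 4 * x ^ 4 := by
        have : (1:ℝ) ≤ (b * |x|) ^ 4 := one_le_pow₀ hlarge.le
        calc (1:ℝ) ≤ (b * |x|) ^ 4 := this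
          _ = b ^ 4 * x ^ 4 := by rw [mul_pow, ← abs_pow, abs_of_nonneg (by positivity)]
      have hb4 : (1:ℝ) ≤ b ^ 4 := one_le_pow₀ hb1
      rcases min_cases (x ^ 4) (1:ℝ) with ⟨h, _⟩ | ⟨h, _⟩ <;> rw [h] <;> nlinarith
    have hcos1 : |1 - Real.cos (a*x)| ≤ 2 := by
      have := Real.neg_one_le_cos (a*x); have := Real.cos_le_one (a*x)
      rw [abs_le]; constructor <;> linarith
    have hcos2 : |1 - Real.cos x| ≤ 2 := by
      have := Real.neg_one_le_cos x; have := Real.cos_le_one x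
      rw [abs_le]; constructor <;> linarith
    have key : |nmr a x| ≤ 2 + 2 * a ^ 2 := by
      calc |nmr a x| ≤ |1 - Real.cos (a*x)| + a ^ 2 * |1 - Real.cos x| := by
            simp only [nmr, sub_sub]
            calc |1 - (Real.cos (a*x) + a ^ 2 * (1 - Real.cos x))|
                = |(1 - Real.cos (a*x)) + (-(a ^ 2 * (1 - Real.cos x)))| := by ring_nf
              _ ≤ |1 - Real.cos (a*x)| + |(-(a ^ 2 * (1 - Real.cos x)))| := abs_add_le _ _
              _ = |1 - Real.cos (a*x)| + a ^ 2 * |1 - Real.cos x| := by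
                  rw [abs_neg, abs_mul, abs_of_nonneg (sq_nonneg a)]
        _ ≤ 2 + a ^ 2 * 2 := add_le_add hcos1 (mul_le_mul_of_nonneg_left hcos2 (sq_nonneg a))
        _ = 2 + 2 * a ^ 2 := by ring
    have h2 : (2 + 2 * a ^ 2) * 1 ≤ (2 + 2 * a ^ 2) * (b ^ 4 * min (x ^ 4) 1) :=
      mul_le_mul_of_nonneg_left hbm (by positivity)
    have h3 : 0 ≤ 5 / 96 * (a ^ 4 + a ^ 2) * min (x ^ 4) 1 := by positivity
    have h4 : (2 + 2*a^2) * (b^4 * min (x^4) 1) = (2 + 2*a^2) * b^4 * min (x^4) 1 := by ring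
    have h5 : ((2 + 2*a^2) * b^4 + 5/96*(a^4 + a^2)) * min (x^4) 1
        = (2 + 2*a^2) * b^4 * min (x^4) 1 + 5/96*(a^4 + a^2) * min (x^4) 1 := by ring
    linarith

lemma integrable_of_bound {p M : ℝ} (hp1 : 1 < p) (hp5 : p < 5) {f : ℝ → ℝ}
    (hf : Measurable f) (hM : ∀ x, |f x| ≤ M * min (x ^ 4) 1) :
    Integrable (fun x : ℝ => f x / |x| ^ p) := by
  have hden : Measurable (fun x : ℝ => |x| ^ p) := by fun_prop
  refine ((dom_integrable hp1 hp5).const_mul M).mono'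
    (hf.div hden).aestronglyMeasurable ?_
  filter_upwards with x
  rw [Real.norm_eq_abs, abs_div, abs_of_nonneg (Real.rpow_nonneg (abs_nonneg x) p)]
  rcases eq_or_ne x 0 with rfl | hx
  · simp [Real.zero_rpow (by positivity : p ≠ 0)]
  · have hE : (0:ℝ) < |x| ^ p := Real.rpow_pos_of_pos (abs_pos.mpr hx) p
    rw [div_le_iff₀ hE]
    calc |f x| ≤ M * min (x ^ 4) 1 := hM x
      _ = M * (min (x ^ 4) 1 / |x| ^ p) * |x| ^ p := by
          field_simp

noncomputable def dd (p a : ℝ) : ℝ := ∫ x : ℝ, nmr a x / |x| ^ p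

lemma nmr_meas (a : ℝ) : Measurable (nmr a) := by unfold nmr; fun_prop

lemma nmr_integrable {p : ℝ} (hp1 : 1 < p) (hp5 : p < 5) (a : ℝ) :
    Integrable (fun x : ℝ => nmr a x / |x| ^ p) :=
  integrable_of_bound hp1 hp5 (nmr_meas a) (nmr_bound a)

lemma scaling {p : ℝ} (hp1 : 1 < p) (hp5 : p < 5) (a : ℝ) {l : ℝ} (hl : 0 < l) :
    ∫ x : ℝ, nmr a (l * x) / |x| ^ p = l ^ (p - 1) * dd p a := by
  have hlp : (0:ℝ) < l ^ p := Real.rpow_pos_of_pos hl p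
  have key : ∀ x : ℝ, nmr a (l * x) / |x| ^ p
      = l ^ p * (nmr a (l * x) / |l * x| ^ p) := by
    intro x
    rcases eq_or_ne x 0 with rfl | hx
    · simp [nmr]
    · have h1 : |l * x| ^ p = l ^ p * |x| ^ p := by
        rw [abs_mul, abs_of_pos hl, Real.mul_rpow hl.le (abs_nonneg x)]
      rw [h1]
      have hE : (0:ℝ) < |x| ^ p := Real.rpow_pos_of_pos (abs_pos.mpr hx) p
      field_simp
  simp_rw [key]
  rw [integral_const_mul, Measure.integral_comp_mul_left (fun y => nmr a y / |y| ^ p) l,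
    smul_eq_mul, abs_of_pos (inv_pos.mpr hl)]
  rw [show l ^ (p - 1) = l ^ p * l⁻¹ by
    rw [Real.rpow_sub hl, Real.rpow_one, div_eq_mul_inv]]
  rw [dd, mul_assoc]

lemma feq {p : ℝ} (hp1 : 1 < p) (hp5 : p < 5) (a : ℝ) {l : ℝ} (hl : 0 < l) :
    dd p (a * l) = l ^ (p - 1) * dd p a + a ^ 2 * dd p l := by
  have hpt : ∀ x : ℝ, nmr a (l * x) / |x| ^ p
      = nmr (a * l) x / |x| ^ p - a ^ 2 * (nmr l x / |x| ^ p) := by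
    intro x
    have : nmr a (l * x) = nmr (a * l) x - a ^ 2 * nmr l x := by
      simp only [nmr, ← mul_assoc]
      ring
    rw [this]; ring
  have h1 := scaling hp1 hp5 a hl
  rw [funext hpt] at h1
  rw [integral_sub (nmr_integrable hp1 hp5 (a*l)) ((nmr_integrable hp1 hp5 l).const_mul _),
    integral_const_mul] at h1
  have : dd p (a*l) - a^2 * dd p l = l ^ (p-1) * dd p a := h1
  linarith

lemma nmr_two (x : ℝ) : nmr 2 x = -8 * Real.sin (x / 2) ^ 4 := by
  have h1 : Real.cos x = 1 - 2 * Real.sin (x / 2) ^ 2 := by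
    have h := Real.cos_two_mul (x / 2)
    rw [show 2 * (x / 2) = x by ring] at h
    have hp := Real.sin_sq_add_cos_sq (x / 2)
    nlinarith
  have h2 : Real.cos (2 * x) = 2 * Real.cos x ^ 2 - 1 := Real.cos_two_mul x
  simp only [nmr]
  rw [h2, h1]; ring

lemma d2_neg {p : ℝ} (hp1 : 1 < p) (hp5 : p < 5) : dd p 2 < 0 := by
  have hint : Integrable (fun x : ℝ => nmr 2 x / |x| ^ p) := nmr_integrable hp1 hp5 2
  have hgnn : 0 ≤ᵐ[volume] fun x : ℝ => -(nmr 2 x / |x| ^ p) := by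
    filter_upwards with x
    have : nmr 2 x ≤ 0 := by
      rw [nmr_two]
      have : (0:ℝ) ≤ Real.sin (x/2) ^ 4 := by positivity
      linarith
    simp only [Pi.zero_apply, neg_nonneg]
    exact div_nonpos_of_nonpos_of_nonneg this (Real.rpow_nonneg (abs_nonneg x) p)
  have hpos : 0 < ∫ x : ℝ, -(nmr 2 x / |x| ^ p) := by
    rw [integral_pos_iff_support_of_nonneg_ae hgnn hint.neg]
    have hsub : Ioo (0:ℝ) 3 ⊆ Function.support fun x : ℝ => -(nmr 2 x / |x| ^ p) := by
      intro x hx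
      have hx0 : 0 < x := hx.1
      have hs : 0 < Real.sin (x / 2) := by
        apply Real.sin_pos_of_pos_of_lt_pi (by linarith)
        have := Real.pi_gt_three
        linarith [hx.2]
      have hden : (0:ℝ) < |x| ^ p := Real.rpow_pos_of_pos (abs_pos.mpr hx0.ne') p
      have : nmr 2 x / |x| ^ p < 0 := by
        apply div_neg_of_neg_of_pos _ hden
        rw [nmr_two]
        have h4 : (0:ℝ) < Real.sin (x/2) ^ 4 := by positivity
        linarith
      simp only [Function.mem_support, neg_ne_zero]
      exact this.ne
    calc (0:ENNReal) < volume (Ioo (0:ℝ) 3) := by simp [Real.volume_Ioo]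
      _ ≤ _ := measure_mono hsub
  rw [integral_neg] at hpos
  have : dd p 2 = ∫ x : ℝ, nmr 2 x / |x| ^ p := rfl
  linarith

lemma two_rpow_ne {p : ℝ} (hp3 : p ≠ 3) : (2:ℝ) ^ (p - 1) - 4 ≠ 0 := by
  have h4 : ((2:ℝ) ^ (2:ℝ)) = 4 := by
    rw [show (2:ℝ) = ((2:ℕ):ℝ) from by norm_num, Real.rpow_natCast]; norm_num
  intro hc
  rcases lt_trichotomy (p - 1) 2 with h | h | h
  · have := (Real.rpow_lt_rpow_left_iff (x := 2) one_lt_two).mpr h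
    rw [h4] at this; linarith
  · exact hp3 (by linarith)
  · have := (Real.rpow_lt_rpow_left_iff (x := 2) one_lt_two).mpr h
    rw [h4] at this; linarith

lemma d_formula {p : ℝ} (hp1 : 1 < p) (hp5 : p < 5) (hp3 : p ≠ 3) {a : ℝ} (ha : 0 ≤ a) :
    dd p a = dd p 2 / ((2:ℝ) ^ (p - 1) - 4) * (a ^ (p - 1) - a ^ 2) := by
  rcases ha.eq_or_lt with rfl | ha0
  · have h0 : dd p 0 = 0 := by
      have he : dd p 0 = ∫ _ : ℝ, (0:ℝ) := by
        unfold dd; congr 1; funext x; simp [nmr]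
      rw [he, integral_zero]
    rw [h0, Real.zero_rpow (sub_ne_zero.mpr (by linarith))]
    ring
  · have h1 := feq hp1 hp5 2 ha0
    have h2 := feq hp1 hp5 a (by norm_num : (0:ℝ) < 2)
    rw [show a * 2 = 2 * a by ring] at h2
    have h4 : (2:ℝ) ^ 2 = 4 := by norm_num
    have hne := two_rpow_ne hp3
    field_simp
    nlinarith [h1, h2]

lemma nmr_neg (a x : ℝ) : nmr (-a) x = nmr a x := by
  simp only [nmr, neg_mul, Real.cos_neg, neg_sq]

theorem stmt0 (H : ℝ) (hH : H ∈ Set.Ioo (0:ℝ) 1 ∨ H ∈ Set.Ioo (1:ℝ) 2) :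
    ∃ C : ℝ, 0 < C ∧ ∀ s t : ℝ, 0 ≤ s → 0 ≤ t →
      (1 - H) * (s ^ (2*H) + t ^ (2*H)
          - (1/2) * ((s + t) ^ (2*H) + |t - s| ^ (2*H)))
        = C * ∫ x : ℝ, (1 - Real.cos (s*x)) * (1 - Real.cos (t*x)) / |x| ^ (1 + 2*H) := by
  have hH0 : 0 < H := by rcases hH with h | h; exacts [h.1, lt_trans one_pos h.1]
  have hH2 : H < 2 := by rcases hH with h | h; exacts [lt_trans h.2 one_lt_two, h.2]
  have hH1 : H ≠ 1 := by rcases hH with h | h; exacts [ne_of_lt h.2, ne_of_gt h.1]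
  set p : ℝ := 1 + 2 * H with hp
  have hp1 : 1 < p := by simp only [hp]; linarith
  have hp5 : p < 5 := by simp only [hp]; linarith
  have hp3 : p ≠ 3 := by simp only [hp]; intro h; apply hH1; linarith
  have hpe : p - 1 = 2 * H := by simp only [hp]; ring
  set c : ℝ := dd p 2 / ((2:ℝ) ^ (p - 1) - 4) with hc
  have hd2 := d2_neg hp1 hp5
  have hden := two_rpow_ne hp3
  have h4 : ((2:ℝ) ^ (2:ℝ)) = 4 := by
    rw [show (2:ℝ) = ((2:ℕ):ℝ) from by norm_num, Real.rpow_natCast]; norm_num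
  have hCpos : 0 < (1 - H) / c := by
    rcases hH with h | h
    · have hlt : (2:ℝ) ^ (p - 1) < 4 := by
        have := (Real.rpow_lt_rpow_left_iff (x := 2) one_lt_two).mpr
          (show p - 1 < 2 by rw [hpe]; linarith [h.2])
        rwa [h4] at this
      have hcpos : 0 < c := by
        rw [hc]; exact div_pos_of_neg_of_neg hd2 (by linarith)
      exact div_pos (by linarith [h.2]) hcpos
    · have hlt : (4:ℝ) < (2:ℝ) ^ (p - 1) := by
        have := (Real.rpow_lt_rpow_left_iff (x := 2) one_lt_two).mpr
          (show 2 < p - 1 by rw [hpe]; linarith [h.1])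
        rwa [h4] at this
      have hcneg : c < 0 := by
        rw [hc]; exact div_neg_of_neg_of_pos hd2 (by linarith)
      exact div_pos_of_neg_of_neg (by linarith [h.1]) hcneg
  have hcne : c ≠ 0 := by
    rcases lt_or_gt_of_ne (show (1 - H) / c ≠ 0 from hCpos.ne') with _ | _ <;>
      (intro h0; rw [h0] at hCpos; simp at hCpos)
  refine ⟨(1 - H) / c, hCpos, fun s t hs ht => ?_⟩
  -- pointwise identity for the integrand
  have hkey : (fun x : ℝ => (1 - Real.cos (s*x)) * (1 - Real.cos (t*x)) / |x| ^ p)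
      = fun x : ℝ => nmr s x / |x| ^ p + nmr t x / |x| ^ p
          - ((1/2) * (nmr (s+t) x / |x| ^ p) + (1/2) * (nmr |s - t| x / |x| ^ p)) := by
    funext x
    have habs : nmr |s - t| x = nmr (s - t) x := by
      rcases abs_cases (s - t) with ⟨h, _⟩ | ⟨h, _⟩
      · rw [h]
      · rw [h, nmr_neg]
    have hnum : (1 - Real.cos (s*x)) * (1 - Real.cos (t*x))
        = nmr s x + nmr t x - ((1/2) * nmr (s+t) x + (1/2) * nmr (s-t) x) := by
      simp only [nmr]
      rw [show (s+t)*x = s*x + t*x by ring, show (s-t)*x = s*x - t*x by ring,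
        Real.cos_add, Real.cos_sub]
      ring
    rw [habs, hnum]; ring
  have hint : ∀ a : ℝ, Integrable (fun x : ℝ => nmr a x / |x| ^ p) :=
    fun a => nmr_integrable hp1 hp5 a
  have hI : ∫ x : ℝ, (1 - Real.cos (s*x)) * (1 - Real.cos (t*x)) / |x| ^ p
      = dd p s + dd p t - ((1/2) * dd p (s+t) + (1/2) * dd p |s - t|) := by
    have h1 : Integrable (fun x : ℝ => nmr s x / |x| ^ p + nmr t x / |x| ^ p) :=
      (hint s).add (hint t)
    have h2 : Integrable (fun x : ℝ => (1/2) * (nmr (s+t) x / |x| ^ p)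
        + (1/2) * (nmr |s - t| x / |x| ^ p)) :=
      ((hint (s+t)).const_mul _).add ((hint |s - t|).const_mul _)
    have h3 : Integrable (fun x : ℝ => (1/2) * (nmr (s+t) x / |x| ^ p)) :=
      (hint (s+t)).const_mul _
    have h4 : Integrable (fun x : ℝ => (1/2) * (nmr |s - t| x / |x| ^ p)) :=
      (hint |s - t|).const_mul _
    rw [hkey, integral_sub h1 h2, integral_add (hint s) (hint t), integral_add h3 h4,
      integral_const_mul, integral_const_mul]
    rfl
  rw [show (1:ℝ) + 2*H = p from hp.symm] at *
  rw [hI, d_formula hp1 hp5 hp3 hs, d_formula hp1 hp5 hp3 ht,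
    d_formula hp1 hp5 hp3 (by linarith : (0:ℝ) ≤ s + t),
    d_formula hp1 hp5 hp3 (abs_nonneg (s - t)), ← hc]
  rw [hpe, show |s - t| = |t - s| from abs_sub_comm s t]
  have hsq : |t - s| ^ 2 = (t - s) ^ 2 := sq_abs _
  rw [hsq]
  field_simp
  ring
end

section
/- Let 0 < α < 1 and s,t ≥ 0, and let ψ_t = 1_{[0,t]}. Then (1/π) ∫_ℝ ψ̂_t(x) conj(ψ̂_s(x)) |x|^α dx = K (s^{1-α} + t^{1-α} - |t-s|^{1-α}) for some constant K > 0 depending only on α, where ψ̂_t(x) = ∫_ℝ e^{ixy} ψ_t(y) dy. -/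
open MeasureTheory Real

/-- `ψ_t = 1_{[0,t]}`. -/
noncomputable def psiInd (t : ℝ) : ℝ → ℝ :=
  fun y => Set.indicator (Set.Icc 0 t) (fun _ => (1:ℝ)) y

/-- Fourier transform with the convention `f̂(x) = ∫ e^{ixy} f(y) dy`. -/
noncomputable def hatF (f : ℝ → ℝ) (x : ℝ) : ℂ :=
  ∫ y : ℝ, Complex.exp (Complex.I * x * y) * (f y : ℂ)

noncomputable def fker (α : ℝ) : ℝ → ℝ := fun x => (1 - Real.cos x) * (|x| ^ α / x ^ 2)

lemma fker_nonneg (α : ℝ) (x : ℝ) : 0 ≤ fker α x := by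
  have h1 : 0 ≤ 1 - Real.cos x := by nlinarith [Real.cos_le_one x]
  have h2 : (0:ℝ) ≤ |x| ^ α / x ^ 2 := by positivity
  exact mul_nonneg h1 h2

lemma one_sub_cos_le (x : ℝ) : 1 - Real.cos x ≤ x ^ 2 / 2 := by
  have h1 : |Real.sin (x/2)| = Real.sqrt ((1 - Real.cos x)/2) := Real.abs_sin_half x
  have h2 : Real.sin (x/2) ^ 2 = (1 - Real.cos x)/2 := by
    have h2 : Real.sin (x/2) ^ 2 = Real.sqrt ((1 - Real.cos x)/2) ^ 2 := by
      rw [← sq_abs, h1]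
    rw [h2, Real.sq_sqrt (by nlinarith [Real.cos_le_one x] : (0:ℝ) ≤ (1 - Real.cos x)/2)]
  have h3 : Real.sin (x/2) ^ 2 ≤ (x/2) ^ 2 := Real.sin_sq_le_sq
  nlinarith

lemma fker_neg (α : ℝ) (x : ℝ) : fker α (-x) = fker α x := by
  simp [fker, Real.cos_neg, abs_neg, neg_sq]

lemma fker_le (α : ℝ) (x : ℝ) : fker α x ≤ |x| ^ α / 2 := by
  rcases eq_or_ne x 0 with rfl | hx
  · simp [fker]
    positivity
  · have hx2 : (0:ℝ) < x ^ 2 := by positivity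
    have : fker α x ≤ (x ^ 2 / 2) * (|x| ^ α / x ^ 2) :=
      mul_le_mul_of_nonneg_right (one_sub_cos_le x) (by positivity)
    calc fker α x ≤ (x ^ 2 / 2) * (|x| ^ α / x ^ 2) := this
    _ = |x| ^ α / 2 := by field_simp

lemma fker_le2 (α : ℝ) {x : ℝ} (hx : x ≠ 0) : fker α x ≤ 2 * |x| ^ (α - 2) := by
  have hax : (0:ℝ) < |x| := abs_pos.2 hx
  have hx2 : x ^ 2 = |x| ^ ((2:ℕ):ℝ) := by
    rw [Real.rpow_natCast]; exact (sq_abs x).symm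
  have hr : |x| ^ α / x ^ 2 = |x| ^ (α - 2) := by
    rw [hx2, ← Real.rpow_sub hax]; norm_num
  have h1 : 1 - Real.cos x ≤ 2 := by nlinarith [Real.neg_one_le_cos x]
  calc fker α x = (1 - Real.cos x) * |x| ^ (α - 2) := by rw [fker, hr]
  _ ≤ 2 * |x| ^ (α - 2) := mul_le_mul_of_nonneg_right h1 (by positivity)

lemma fker_integrable {α : ℝ} (hα : α ∈ Set.Ioo (0:ℝ) 1) : Integrable (fker α) := by
  have meas : Measurable (fker α) := by unfold fker; fun_prop
  have hA : IntegrableOn (fker α) (Set.Icc (-1) 1) := by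
    have hcont : Continuous (fun x : ℝ => |x| ^ α / 2) :=
      (continuous_abs.rpow_const (fun x => Or.inr hα.1.le)).div_const 2
    refine Integrable.mono (hcont.integrableOn_Icc) meas.aestronglyMeasurable ?_
    refine Filter.Eventually.of_forall (fun x => ?_)
    rw [Real.norm_eq_abs, Real.norm_eq_abs, abs_of_nonneg (fker_nonneg α x),
      abs_of_nonneg (by positivity)]
    exact fker_le α x
  have hB : IntegrableOn (fker α) (Set.Ioi 1) := by
    have hmaj : IntegrableOn (fun x : ℝ => 2 * x ^ (α - 2)) (Set.Ioi 1) :=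
      (integrableOn_Ioi_rpow_of_lt (by linarith [hα.2]) one_pos).const_mul 2
    refine Integrable.mono hmaj meas.aestronglyMeasurable ?_
    rw [ae_restrict_iff' measurableSet_Ioi]
    refine Filter.Eventually.of_forall (fun x hx => ?_)
    have hx1 : (1:ℝ) < x := hx
    have hxpos : (0:ℝ) < x := by linarith
    rw [Real.norm_eq_abs, Real.norm_eq_abs, abs_of_nonneg (fker_nonneg α x),
      abs_of_nonneg (by positivity)]
    have := fker_le2 α (ne_of_gt hxpos)
    rwa [abs_of_pos hxpos] at this
  have hC : IntegrableOn (fker α) (Set.Iio (-1)) := by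
    have h1 : Integrable (Set.indicator (Set.Ioi 1) (fker α)) :=
      (integrable_indicator_iff measurableSet_Ioi).2 hB
    have h2 : Integrable (fun x => Set.indicator (Set.Ioi 1) (fker α) (-x)) := h1.comp_neg
    have h3 : (fun x => Set.indicator (Set.Ioi 1) (fker α) (-x))
        = Set.indicator (Set.Iio (-1:ℝ)) (fker α) := by
      funext x
      by_cases hx : x ∈ Set.Iio (-1:ℝ)
      · have hx' : -x ∈ Set.Ioi (1:ℝ) := by simp at hx ⊢; linarith
        rw [Set.indicator_of_mem hx', Set.indicator_of_mem hx, fker_neg]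
      · have hx' : -x ∉ Set.Ioi (1:ℝ) := by simp at hx ⊢; linarith
        rw [Set.indicator_of_notMem hx', Set.indicator_of_notMem hx]
    rw [h3] at h2
    exact (integrable_indicator_iff measurableSet_Iio).1 h2
  have hcover : (Set.univ : Set ℝ) ⊆ Set.Iio (-1) ∪ (Set.Icc (-1) 1 ∪ Set.Ioi 1) := by
    intro x _
    by_cases h1 : x < -1
    · exact Or.inl h1
    · by_cases h2 : x ≤ 1
      · exact Or.inr (Or.inl ⟨by linarith, h2⟩)
      · exact Or.inr (Or.inr (by simpa using lt_of_not_ge h2))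
  rw [← integrableOn_univ]
  exact (hC.union (hA.union hB)).mono_set hcover

lemma fker_integral_pos {α : ℝ} (hα : α ∈ Set.Ioo (0:ℝ) 1) : 0 < ∫ x : ℝ, fker α x := by
  rw [integral_pos_iff_support_of_nonneg_ae (Filter.Eventually.of_forall (fker_nonneg α))
    (fker_integrable hα)]
  have hsub : Set.Ioo (0:ℝ) 1 ⊆ Function.support (fker α) := by
    intro x hx
    have hx0 : (0:ℝ) < x := hx.1
    have hx1 : x < 1 := hx.2
    have hπ : (3:ℝ) < π := Real.pi_gt_three
    have hcosne : Real.cos x ≠ 1 := by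
      intro h
      have := (Real.cos_eq_one_iff_of_lt_of_lt (by nlinarith : -(2*π) < x) (by nlinarith : x < 2*π)).1 h
      exact (ne_of_gt hx0) this
    have h1 : 0 < 1 - Real.cos x :=
      sub_pos.2 (lt_of_le_of_ne (Real.cos_le_one x) hcosne)
    have h2 : 0 < |x| ^ α / x ^ 2 := by
      have : (0:ℝ) < |x| := abs_pos.2 (ne_of_gt hx0)
      positivity
    exact ne_of_gt (mul_pos h1 h2)
  calc (0:ENNReal) < volume (Set.Ioo (0:ℝ) 1) := by simp [Real.volume_Ioo]
  _ ≤ volume (Function.support (fker α)) := measure_mono hsub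

lemma fker_scale {α : ℝ} {u : ℝ} (hu : u ≠ 0) (x : ℝ) :
    (1 - Real.cos (u*x)) * (|x| ^ α / x ^ 2)
      = |u| ^ (2 - α) * ((1 - Real.cos (u*x)) * (|u*x| ^ α / (u*x) ^ 2)) := by
  rcases eq_or_ne x 0 with rfl | hx
  · simp
  · have hau : (0:ℝ) < |u| := abs_pos.2 hu
    have h2 : |u| ^ (2 - α) * |u| ^ α = u ^ 2 := by
      rw [← Real.rpow_add hau]
      norm_num
    rw [abs_mul, Real.mul_rpow (abs_nonneg u) (abs_nonneg x), mul_pow]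
    have hu2 : u ^ 2 ≠ 0 := pow_ne_zero 2 hu
    have hx2 : x ^ 2 ≠ 0 := pow_ne_zero 2 hx
    field_simp
    linear_combination (-(1 - Real.cos (u*x))) * h2

lemma scaled_integrable {α : ℝ} (hα : α ∈ Set.Ioo (0:ℝ) 1) (u : ℝ) :
    Integrable (fun x : ℝ => (1 - Real.cos (u*x)) * (|x| ^ α / x ^ 2)) := by
  rcases eq_or_ne u 0 with rfl | hu
  · simpa using (integrable_zero ℝ ℝ (volume : Measure ℝ))
  · have : (fun x : ℝ => (1 - Real.cos (u*x)) * (|x| ^ α / x ^ 2))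
        = fun x => |u| ^ (2 - α) * fker α (u * x) := by
      funext x; exact fker_scale hu x
    rw [this]
    exact ((fker_integrable hα).comp_mul_left' hu).const_mul _

lemma scaled_integral {α : ℝ} (hα : α ∈ Set.Ioo (0:ℝ) 1) (u : ℝ) :
    ∫ x : ℝ, (1 - Real.cos (u*x)) * (|x| ^ α / x ^ 2)
      = |u| ^ (1 - α) * ∫ x : ℝ, fker α x := by
  rcases eq_or_ne u 0 with rfl | hu
  · simp [Real.zero_rpow (by linarith [hα.2] : (1:ℝ) - α ≠ 0)]
  · have hau : (0:ℝ) < |u| := abs_pos.2 hu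
    have h1 : (fun x : ℝ => (1 - Real.cos (u*x)) * (|x| ^ α / x ^ 2))
        = fun x => |u| ^ (2 - α) * fker α (u * x) := by
      funext x; exact fker_scale hu x
    rw [h1, MeasureTheory.integral_const_mul,
      MeasureTheory.Measure.integral_comp_mul_left (fker α) u]
    rw [smul_eq_mul, abs_inv, ← Real.rpow_neg_one |u|, ← mul_assoc,
      ← Real.rpow_add hau]
    norm_num
    left
    ring_nf

lemma hatF_eq {t x : ℝ} (ht : 0 ≤ t) (hx : x ≠ 0) :
    hatF (psiInd t) x = (Complex.exp (Complex.I * x * t) - 1) / (Complex.I * x) := by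
  have hc : (Complex.I * (x:ℂ)) ≠ 0 :=
    mul_ne_zero Complex.I_ne_zero (Complex.ofReal_ne_zero.2 hx)
  have key : ∀ y : ℝ, Complex.exp (Complex.I * x * y) * ((psiInd t y : ℝ) : ℂ)
      = Set.indicator (Set.Icc 0 t) (fun y : ℝ => Complex.exp ((Complex.I * x) * y)) y := by
    intro y
    unfold psiInd
    by_cases hy : y ∈ Set.Icc (0:ℝ) t
    · rw [Set.indicator_of_mem hy, Set.indicator_of_mem hy]
      simp [mul_assoc]
    · rw [Set.indicator_of_notMem hy, Set.indicator_of_notMem hy]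
      simp
  unfold hatF
  rw [show (fun y : ℝ => Complex.exp (Complex.I * x * y) * ((psiInd t y : ℝ) : ℂ))
      = fun y : ℝ => Set.indicator (Set.Icc 0 t) (fun y : ℝ => Complex.exp ((Complex.I * x) * y)) y
    from funext key]
  rw [integral_indicator measurableSet_Icc, integral_Icc_eq_integral_Ioc,
    ← intervalIntegral.integral_of_le ht, integral_exp_mul_complex hc]
  simp [mul_assoc]

lemma norm_exp_sub_one_sq (x u : ℝ) :
    ‖Complex.exp (Complex.I * x * u) - 1‖ ^ 2 = 2 * (1 - Real.cos (u * x)) := by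
  have h : Complex.I * (x:ℂ) * (u:ℂ) = ((u*x : ℝ):ℂ) * Complex.I := by push_cast; ring
  rw [h, Complex.sq_norm, Complex.normSq_apply]
  simp only [Complex.sub_re, Complex.sub_im, Complex.exp_ofReal_mul_I_re,
    Complex.exp_ofReal_mul_I_im, Complex.one_re, Complex.one_im]
  nlinarith [Real.sin_sq_add_cos_sq (u*x)]

lemma conj_exp_sub_one (y u : ℝ) :
    (starRingEnd ℂ) (Complex.exp (Complex.I * y * u) - 1)
      = Complex.exp (Complex.I * (-y:ℝ) * u) - 1 := by
  rw [map_sub, map_one, ← Complex.exp_conj]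
  rw [map_mul, map_mul, Complex.conj_I, Complex.conj_ofReal, Complex.conj_ofReal]
  push_cast
  ring_nf

theorem stmt3 (α : ℝ) (hα : α ∈ Set.Ioo (0:ℝ) 1) :
    ∃ K : ℝ, 0 < K ∧ ∀ s t : ℝ, 0 ≤ s → 0 ≤ t →
      ((1/Real.pi : ℝ) : ℂ) *
        ∫ x : ℝ, hatF (psiInd t) x * (starRingEnd ℂ) (hatF (psiInd s) x) * (|x| ^ α : ℝ)
      = ((K * (s ^ (1-α) + t ^ (1-α) - |t - s| ^ (1-α)) : ℝ) : ℂ) := by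
  set c : ℝ := ∫ x : ℝ, fker α x with hc
  have hcpos : 0 < c := fker_integral_pos hα
  refine ⟨c / Real.pi, by positivity, ?_⟩
  intro s t hs ht
  set G : ℝ → ℂ := fun x => (Complex.exp (Complex.I * x * t) - 1) *
      (starRingEnd ℂ) (Complex.exp (Complex.I * x * s) - 1) * ((|x| ^ α / x ^ 2 : ℝ) : ℂ)
    with hG
  -- integrand equality
  have hFG : ∀ x : ℝ, hatF (psiInd t) x * (starRingEnd ℂ) (hatF (psiInd s) x)
      * ((|x| ^ α : ℝ) : ℂ) = G x := by
    intro x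
    rcases eq_or_ne x 0 with rfl | hx
    · simp [hG, Real.zero_rpow hα.1.ne']
    · have hx' : (x:ℂ) ≠ 0 := Complex.ofReal_ne_zero.2 hx
      rw [hG, hatF_eq ht hx, hatF_eq hs hx, map_div₀, map_sub, map_one, map_mul,
        Complex.conj_I, Complex.conj_ofReal]
      have hx2 : ((x:ℂ))^2 ≠ 0 := pow_ne_zero 2 hx'
      push_cast
      rw [map_sub, map_one]
      field_simp
      ring_nf
      simp [Complex.I_sq]
      ring
  rw [integral_congr_ae (Filter.Eventually.of_forall hFG)]
  -- integrability of G
  have measG : AEStronglyMeasurable G volume := by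
    apply Measurable.aestronglyMeasurable
    rw [hG]
    have m1 : Measurable fun x : ℝ => Complex.exp (Complex.I * x * t) - 1 :=
      ((Complex.continuous_exp.comp (by continuity)).sub continuous_const).measurable
    have m2 : Measurable fun x : ℝ => (starRingEnd ℂ) (Complex.exp (Complex.I * x * s) - 1) :=
      (continuous_star.comp
        ((Complex.continuous_exp.comp (by continuity)).sub continuous_const)).measurable
    have m3 : Measurable fun x : ℝ => ((|x| ^ α / x ^ 2 : ℝ) : ℂ) :=
      Complex.measurable_ofReal.comp (by fun_prop)
    exact (m1.mul m2).mul m3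
  have hGbound : ∀ x : ℝ, ‖G x‖ ≤ (1 - Real.cos (t*x)) * (|x| ^ α / x ^ 2)
      + (1 - Real.cos (s*x)) * (|x| ^ α / x ^ 2) := by
    intro x
    have hr : (0:ℝ) ≤ |x| ^ α / x ^ 2 := by positivity
    have h1 := norm_exp_sub_one_sq x t
    have h2 := norm_exp_sub_one_sq x s
    have hnn1 : (0:ℝ) ≤ ‖Complex.exp (Complex.I * x * t) - 1‖ := norm_nonneg _
    have hnn2 : (0:ℝ) ≤ ‖Complex.exp (Complex.I * x * s) - 1‖ := norm_nonneg _
    rw [hG]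
    simp only [norm_mul, RCLike.norm_conj, Complex.norm_real, Real.norm_eq_abs,
      abs_of_nonneg hr]
    nlinarith [sq_nonneg (‖Complex.exp (Complex.I * x * t) - 1‖
        - ‖Complex.exp (Complex.I * x * s) - 1‖)]
  have hIntG : Integrable G := by
    refine Integrable.mono ((scaled_integrable hα t).add (scaled_integrable hα s))
      measG (Filter.Eventually.of_forall (fun x => ?_))
    refine (hGbound x).trans ?_
    rw [Real.norm_eq_abs]
    exact le_abs_self _
  -- conjugation invariance
  have hGconj : ∀ x : ℝ, (starRingEnd ℂ) (G x) = G (-x) := by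
    intro x
    rw [hG]
    simp only [map_mul, Complex.conj_conj, Complex.conj_ofReal]
    rw [conj_exp_sub_one x t]
    have h2 : (starRingEnd ℂ) (Complex.exp (Complex.I * (-x:ℝ) * s) - 1)
        = Complex.exp (Complex.I * x * s) - 1 := by
      rw [conj_exp_sub_one (-x) s, neg_neg]
    rw [← h2]
    simp only [abs_neg, neg_sq]
  have hself : (starRingEnd ℂ) (∫ x : ℝ, G x) = ∫ x : ℝ, G x := by
    rw [← integral_conj]
    calc ∫ x : ℝ, (starRingEnd ℂ) (G x) = ∫ x : ℝ, G (-x) := by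
          simp_rw [hGconj]
      _ = ∫ x : ℝ, G x := integral_neg_eq_self G volume
  -- real part
  have hre : ∀ x : ℝ, (G x).re = (1 - Real.cos (t*x)) * (|x| ^ α / x ^ 2)
      + (1 - Real.cos (s*x)) * (|x| ^ α / x ^ 2)
      - (1 - Real.cos ((t-s)*x)) * (|x| ^ α / x ^ 2) := by
    intro x
    have e1 : Complex.I * (x:ℂ) * (t:ℂ) = ((t*x:ℝ):ℂ) * Complex.I := by push_cast; ring
    have e2 : Complex.I * (x:ℂ) * (s:ℂ) = ((s*x:ℝ):ℂ) * Complex.I := by push_cast; ring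
    rw [hG]
    simp only [e1, e2, Complex.mul_re, Complex.mul_im, Complex.sub_re, Complex.sub_im,
      Complex.exp_ofReal_mul_I_re, Complex.exp_ofReal_mul_I_im, Complex.one_re,
      Complex.one_im, Complex.conj_re, Complex.conj_im, Complex.ofReal_re, Complex.ofReal_im]
    have : (t-s)*x = t*x - s*x := by ring
    rw [this, Real.cos_sub]
    ring
  -- compute the integral
  have hint : ∫ x : ℝ, G x = (((t ^ (1-α) + s ^ (1-α) - |t - s| ^ (1-α)) * c : ℝ) : ℂ) := by
    have h1 : ((∫ x : ℝ, G x).re : ℂ) = ∫ x : ℝ, G x := Complex.conj_eq_iff_re.1 hself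
    have h2 : (∫ x : ℝ, G x).re = ∫ x : ℝ, (G x).re := by
      have := integral_re (𝕜 := ℂ) hIntG
      simp only [RCLike.re_to_complex] at this
      exact this.symm
    rw [← h1, h2]
    norm_cast
    rw [integral_congr_ae (Filter.Eventually.of_forall hre)]
    have hA := scaled_integrable hα t
    have hB := scaled_integrable hα s
    have hC := scaled_integrable hα (t-s)
    have hAB : Integrable (fun x : ℝ => (1 - Real.cos (t*x)) * (|x| ^ α / x ^ 2)
        + (1 - Real.cos (s*x)) * (|x| ^ α / x ^ 2)) := by exact hA.add hB
    rw [integral_sub hAB hC, integral_add hA hB,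
      scaled_integral hα t, scaled_integral hα s, scaled_integral hα (t-s),
      abs_of_nonneg ht, abs_of_nonneg hs]
    ring
  rw [hint, ← Complex.ofReal_mul]
  norm_cast
  have hπ : Real.pi ≠ 0 := Real.pi_ne_zero
  field_simp
  ring
end

section
/- Let α ∈ (0,2] and let p_v denote the symmetric α-stable density with p̂_v(x) = e^{-v|x|^α}. For ψ_t = 1_{[0,t]} − 1_{[-t,0]} and α < 3/2, lim_{T→∞} (1/(2πT)) ∫_ℝ ψ̂_s(x) conj(ψ̂_t(x)) ∫_0^T ∫_v^T ∫_v^T e^{-(u+r-2v)|x|^α} dr du dv dx = (2/π) ∫_ℝ (1−cos tx)(1−cos sx) / |x|^{2+2α} dx. -/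
open MeasureTheory Real Filter

/-- `ψ_t = 1_{[0,t]} - 1_{[-t,0]}`. -/
noncomputable def psiSub (t : ℝ) : ℝ → ℝ :=
  fun y => Set.indicator (Set.Icc 0 t) (fun _ => (1:ℝ)) y
    - Set.indicator (Set.Icc (-t) 0) (fun _ => (1:ℝ)) y

lemma int_exp_mul (k a b : ℝ) (hk : k ≠ 0) :
    ∫ x in a..b, Real.exp (k * x) = (Real.exp (k * b) - Real.exp (k * a)) / k := by
  have hc : (k : ℂ) ≠ 0 := by exact_mod_cast hk
  have h := integral_exp_mul_complex (a := a) (b := b) hc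
  have h2 : ((∫ x in a..b, Real.exp (k * x) : ℝ) : ℂ)
      = ∫ x in a..b, Complex.exp ((k : ℂ) * x) := by
    rw [← intervalIntegral.integral_ofReal]
    apply intervalIntegral.integral_congr
    intro y _
    push_cast [Complex.ofReal_exp]
    ring_nf
  rw [h] at h2
  have : ((∫ x in a..b, Real.exp (k * x) : ℝ) : ℂ)
      = (((Real.exp (k * b) - Real.exp (k * a)) / k : ℝ) : ℂ) := by
    rw [h2]; push_cast [Complex.ofReal_exp]; ring_nf
  exact_mod_cast this

/-- Closed form for `∫_0^T (1 - e^{-cw})^2 dw`. -/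
noncomputable def Aclosed (c T : ℝ) : ℝ :=
  T - 2 * (1 - Real.exp (-(T * c))) / c + (1 - Real.exp (-(2 * (T * c)))) / (2 * c)

lemma Aint {c : ℝ} (hc : 0 < c) (T : ℝ) :
    ∫ w in (0:ℝ)..T, (1 - Real.exp (-(c * w)))^2 = Aclosed c T := by
  have key : ∀ w : ℝ, (1 - Real.exp (-(c * w)))^2
      = 1 - 2 * Real.exp ((-c) * w) + Real.exp ((-(2*c)) * w) := by
    intro w
    have h1 : Real.exp (-(c * w)) ^ 2 = Real.exp ((-(2*c)) * w) := by
      rw [sq, ← Real.exp_add]; ring_nf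
    rw [sub_sq, one_pow, h1]; ring_nf
  simp only [key]
  have i1 : IntervalIntegrable (fun w : ℝ => (1:ℝ) - 2 * Real.exp ((-c) * w)) volume 0 T :=
    (continuous_const.sub (continuous_const.mul (Real.continuous_exp.comp (continuous_const.mul continuous_id)))).intervalIntegrable _ _
  have i2 : IntervalIntegrable (fun w : ℝ => Real.exp ((-(2*c)) * w)) volume 0 T :=
    (Real.continuous_exp.comp (continuous_const.mul continuous_id)).intervalIntegrable _ _
  have i3 : IntervalIntegrable (fun w : ℝ => 2 * Real.exp ((-c) * w)) volume 0 T :=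
    (continuous_const.mul (Real.continuous_exp.comp (continuous_const.mul continuous_id))).intervalIntegrable _ _
  rw [intervalIntegral.integral_add i1 i2, intervalIntegral.integral_sub (intervalIntegrable_const) i3,
    intervalIntegral.integral_const_mul, int_exp_mul _ _ _ (by linarith : (-c) ≠ 0),
    int_exp_mul _ _ _ (by linarith : (-(2*c)) ≠ 0)]
  unfold Aclosed
  field_simp [hc.ne']
  ring_nf
  simp only [intervalIntegral.integral_const, Real.exp_zero, sub_zero, smul_eq_mul, mul_one]
  ring

lemma triple_eq {c : ℝ} (hc : 0 < c) (T : ℝ) :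
    (∫ v in (0:ℝ)..T, ∫ u in v..T, ∫ r in v..T, Real.exp (-((u + r - 2*v) * c)))
      = Aclosed c T / c^2 := by
  have hcne : c ≠ 0 := hc.ne'
  have hneg : (-c) ≠ 0 := by linarith
  have h1 : ∀ v u : ℝ, (∫ r in v..T, Real.exp (-((u + r - 2*v) * c)))
      = Real.exp (-((u - 2*v) * c)) * ((Real.exp (-(v*c)) - Real.exp (-(T*c))) / c) := by
    intro v u
    have e : ∀ r : ℝ, Real.exp (-((u + r - 2*v) * c))
        = Real.exp (-((u - 2*v) * c)) * Real.exp ((-c) * r) := by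
      intro r; rw [← Real.exp_add]; ring_nf
    simp only [e]
    rw [intervalIntegral.integral_const_mul, int_exp_mul _ _ _ hneg]
    congr 1
    rw [show (-c)*T = -(T*c) by ring, show (-c)*v = -(v*c) by ring, div_neg, ← neg_div, neg_sub]
  have h2 : ∀ v : ℝ, (∫ u in v..T, ∫ r in v..T, Real.exp (-((u + r - 2*v) * c)))
      = Real.exp (2*(v*c)) * ((Real.exp (-(v*c)) - Real.exp (-(T*c))) / c)^2 := by
    intro v
    simp only [h1]
    rw [intervalIntegral.integral_mul_const]
    have e : ∀ u : ℝ, Real.exp (-((u - 2*v) * c))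
        = Real.exp (2*(v*c)) * Real.exp ((-c) * u) := by
      intro u; rw [← Real.exp_add]; ring_nf
    simp only [e]
    rw [intervalIntegral.integral_const_mul, int_exp_mul _ _ _ hneg]
    rw [show (-c)*T = -(T*c) by ring, show (-c)*v = -(v*c) by ring, div_neg, ← neg_div, neg_sub]
    ring
  simp only [h2]
  have hpt : ∀ v : ℝ, Real.exp (2*(v*c)) * ((Real.exp (-(v*c)) - Real.exp (-(T*c))) / c)^2
      = (1/c^2) * (1 - 2*Real.exp (-(T*c)) * Real.exp (c*v) + Real.exp (-(2*(T*c))) * Real.exp ((2*c)*v)) := by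
    intro v
    have ha : Real.exp (v*c) ≠ 0 := (Real.exp_pos _).ne'
    rw [show (2:ℝ)*(v*c) = v*c + v*c by ring, Real.exp_add,
      show c*v = v*c from mul_comm c v, show (2*c)*v = v*c + v*c by ring, Real.exp_add,
      Real.exp_neg (v*c), Real.exp_neg (T*c), Real.exp_neg (2*(T*c)),
      show (2:ℝ)*(T*c) = T*c + T*c by ring, Real.exp_add]
    field_simp
    ring
  rw [intervalIntegral.integral_congr (fun v _ => hpt v), intervalIntegral.integral_const_mul]
  have i1 : IntervalIntegrable (fun v : ℝ => (1:ℝ) - 2*Real.exp (-(T*c)) * Real.exp (c*v)) volume 0 T := by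
    apply Continuous.intervalIntegrable
    exact continuous_const.sub (continuous_const.mul (Real.continuous_exp.comp (continuous_const.mul continuous_id)))
  have i2 : IntervalIntegrable (fun v : ℝ => Real.exp (-(2*(T*c))) * Real.exp ((2*c)*v)) volume 0 T := by
    apply Continuous.intervalIntegrable
    exact continuous_const.mul (Real.continuous_exp.comp (continuous_const.mul continuous_id))
  have i3 : IntervalIntegrable (fun v : ℝ => 2*Real.exp (-(T*c)) * Real.exp (c*v)) volume 0 T := by
    apply Continuous.intervalIntegrable
    exact continuous_const.mul (Real.continuous_exp.comp (continuous_const.mul continuous_id))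
  rw [intervalIntegral.integral_add i1 i2, intervalIntegral.integral_sub intervalIntegrable_const i3,
    intervalIntegral.integral_const_mul, intervalIntegral.integral_const_mul,
    int_exp_mul _ _ _ hcne, int_exp_mul _ _ _ (by linarith : (2*c) ≠ 0)]
  unfold Aclosed
  rw [show c*T = T*c from mul_comm c T, show (2*c)*T = T*c + T*c by ring, Real.exp_add,
    Real.exp_neg (T*c), Real.exp_neg (2*(T*c)), show (2:ℝ)*(T*c) = T*c + T*c by ring, Real.exp_add,
    show c*(0:ℝ) = 0 by ring, show (2*c)*(0:ℝ) = 0 by ring, Real.exp_zero]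
  have hE : Real.exp (T*c) ≠ 0 := (Real.exp_pos _).ne'
  field_simp
  ring_nf
  simp only [intervalIntegral.integral_const, sub_zero, smul_eq_mul, mul_one]
  ring

lemma A_nonneg {c : ℝ} (hc : 0 < c) {T : ℝ} (hT : 0 ≤ T) : 0 ≤ Aclosed c T := by
  rw [← Aint hc]
  apply intervalIntegral.integral_nonneg hT
  intro u _; positivity

lemma A_le {c : ℝ} (hc : 0 < c) {T : ℝ} (hT : 0 ≤ T) : Aclosed c T ≤ T := by
  rw [← Aint hc]
  calc (∫ w in (0:ℝ)..T, (1 - Real.exp (-(c * w)))^2)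
      ≤ ∫ _ in (0:ℝ)..T, (1:ℝ) := by
        apply intervalIntegral.integral_mono_on hT _ intervalIntegrable_const
        · intro w hw
          have h1 : Real.exp (-(c*w)) ≤ 1 := Real.exp_le_one_iff.2 (by nlinarith [hw.1])
          nlinarith [Real.exp_pos (-(c*w))]
        · apply Continuous.intervalIntegrable
          fun_prop
    _ = T := by simp

lemma A_ge {c : ℝ} (hc : 0 < c) {T : ℝ} (hT : 0 ≤ T) : T - 2/c ≤ Aclosed c T := by
  unfold Aclosed
  have h1 : 0 ≤ Real.exp (-(T*c)) := (Real.exp_pos _).le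
  have h2 : Real.exp (-(2*(T*c))) ≤ 1 := Real.exp_le_one_iff.2 (by nlinarith)
  have k1 : 2 * (1 - Real.exp (-(T*c))) / c ≤ 2 / c :=
    (div_le_div_iff_of_pos_right hc).2 (by nlinarith)
  have k2 : (0:ℝ) ≤ (1 - Real.exp (-(2*(T*c)))) / (2*c) :=
    div_nonneg (by linarith) (by linarith)
  linarith

lemma A_div_tendsto {c : ℝ} (hc : 0 < c) :
    Tendsto (fun T : ℝ => Aclosed c T / T) atTop (nhds 1) := by
  apply tendsto_of_tendsto_of_tendsto_of_le_of_le' (g := fun T : ℝ => 1 - (2/c)/T)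
    (h := fun _ : ℝ => (1:ℝ))
  · have : Tendsto (fun T : ℝ => (2/c)/T) atTop (nhds 0) :=
      Tendsto.div_atTop tendsto_const_nhds tendsto_id
    simpa using tendsto_const_nhds.sub this
  · exact tendsto_const_nhds
  · filter_upwards [eventually_gt_atTop (0:ℝ)] with T hT
    have h := (div_le_div_iff_of_pos_right hT).2 (A_ge hc hT.le)
    calc (1:ℝ) - (2/c)/T = (T - 2/c)/T := by
          rw [sub_div, div_self hT.ne']
      _ ≤ Aclosed c T / T := h
  · filter_upwards [eventually_gt_atTop (0:ℝ)] with T hT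
    exact (div_le_one hT).2 (A_le hc hT.le)

lemma hatF_psi (t x : ℝ) (ht : 0 ≤ t) (hx : x ≠ 0) :
    hatF (psiSub t) x = ((2 * Real.cos (t*x) - 2 : ℝ) : ℂ) / (Complex.I * x) := by
  have hI : Complex.I * (x:ℂ) ≠ 0 :=
    mul_ne_zero Complex.I_ne_zero (by exact_mod_cast hx)
  have hsplit : ∀ y : ℝ, Complex.exp (Complex.I * x * y) * ((psiSub t y : ℝ) : ℂ)
      = Set.indicator (Set.Icc 0 t) (fun y : ℝ => Complex.exp (Complex.I * x * y)) y
        - Set.indicator (Set.Icc (-t) 0) (fun y : ℝ => Complex.exp (Complex.I * x * y)) y := by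
    intro y
    unfold psiSub
    by_cases h1 : y ∈ Set.Icc (0:ℝ) t <;> by_cases h2 : y ∈ Set.Icc (-t) (0:ℝ) <;>
      simp [Set.indicator_of_mem, Set.indicator_of_notMem, h1, h2]
  unfold hatF
  rw [integral_congr_ae (Filter.Eventually.of_forall hsplit)]
  have cont : Continuous (fun y : ℝ => Complex.exp (Complex.I * x * y)) := by fun_prop
  have int1 : Integrable (Set.indicator (Set.Icc (0:ℝ) t) (fun y : ℝ => Complex.exp (Complex.I * x * y))) :=
    (integrable_indicator_iff measurableSet_Icc).2 (cont.integrableOn_Icc)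
  have int2 : Integrable (Set.indicator (Set.Icc (-t) (0:ℝ)) (fun y : ℝ => Complex.exp (Complex.I * x * y))) :=
    (integrable_indicator_iff measurableSet_Icc).2 (cont.integrableOn_Icc)
  rw [integral_sub int1 int2, integral_indicator measurableSet_Icc,
    integral_indicator measurableSet_Icc,
    integral_Icc_eq_integral_Ioc, integral_Icc_eq_integral_Ioc,
    ← intervalIntegral.integral_of_le ht, ← intervalIntegral.integral_of_le (neg_nonpos.2 ht)]
  have key : ∀ a b : ℝ, (∫ y in a..b, Complex.exp (Complex.I * x * y))
      = (Complex.exp (Complex.I * x * b) - Complex.exp (Complex.I * x * a)) / (Complex.I * x) := by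
    intro a b
    have := integral_exp_mul_complex (a := a) (b := b) hI
    simpa [mul_assoc] using this
  rw [key, key]
  have h2cos : Complex.exp (Complex.I * x * t) + Complex.exp (Complex.I * x * (-t))
      = 2 * Complex.cos (t * x) := by
    rw [Complex.two_cos]
    push_cast
    ring_nf
  rw [div_sub_div_same]
  congr 1
  push_cast [Complex.ofReal_cos] at h2cos ⊢
  simp only [mul_zero, Complex.exp_zero]
  linear_combination h2cos

lemma hatF_prod (s t x : ℝ) (hs : 0 ≤ s) (ht : 0 ≤ t) (hx : x ≠ 0) :
    hatF (psiSub s) x * (starRingEnd ℂ) (hatF (psiSub t) x)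
      = (((2 - 2*Real.cos (s*x)) * (2 - 2*Real.cos (t*x)) / x^2 : ℝ) : ℂ) := by
  have hxc : (x:ℂ) ≠ 0 := by exact_mod_cast hx
  rw [hatF_psi s x hs hx, hatF_psi t x ht hx, map_div₀, Complex.conj_ofReal, map_mul,
    Complex.conj_I]
  rw [div_mul_div_comm]
  have hden : (Complex.I * x) * (-Complex.I * (starRingEnd ℂ) x) = ((x^2 : ℝ) : ℂ) := by
    rw [Complex.conj_ofReal]
    push_cast
    ring_nf
    simp [Complex.I_sq]
  rw [hden]
  push_cast
  ring

lemma h_nonneg (s t α : ℝ) (x : ℝ) :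
    0 ≤ (1 - Real.cos (t*x)) * (1 - Real.cos (s*x)) / |x| ^ (2 + 2*α) := by
  apply div_nonneg
  · have h1 := Real.cos_le_one (t*x); have h2 := Real.cos_le_one (s*x); nlinarith
  · positivity

lemma h_integrable (α s t : ℝ) (hα0 : 0 < α) (hα' : α < 3/2) :
    Integrable (fun x : ℝ => (1 - Real.cos (t*x)) * (1 - Real.cos (s*x)) / |x| ^ (2 + 2*α)) := by
  set f := fun x : ℝ => (1 - Real.cos (t*x)) * (1 - Real.cos (s*x)) / |x| ^ (2 + 2*α) with hf
  have hmeas : Measurable f := by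
    apply Measurable.div
    · fun_prop
    · exact (Real.continuous_rpow_const (by linarith)).comp continuous_abs |>.measurable
  have I1 : IntegrableOn f (Set.Ioc 0 1) := by
    have base : IntegrableOn (fun x : ℝ => x ^ (2 - 2*α)) (Set.Ioc (0:ℝ) 1) := by
      have h := intervalIntegral.intervalIntegrable_rpow' (a := (0:ℝ)) (b := 1) (r := 2 - 2*α) (by linarith)
      rwa [intervalIntegrable_iff_integrableOn_Ioc_of_le zero_le_one] at h
    apply Integrable.mono' (base.const_mul (t^2*s^2/4)) (hmeas.aestronglyMeasurable.restrict)
    filter_upwards [ae_restrict_mem measurableSet_Ioc] with x hx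
    obtain ⟨hx0, hx1⟩ := hx
    rw [Real.norm_eq_abs, abs_of_nonneg (h_nonneg s t α x)]
    have hpow : (0:ℝ) < x ^ (2 + 2*α) := Real.rpow_pos_of_pos hx0 _
    have hnum : (1 - Real.cos (t*x)) * (1 - Real.cos (s*x)) ≤ (t^2*s^2/4) * x^(4:ℕ) := by
      have b1 : 1 - Real.cos (t*x) ≤ (t*x)^2/2 := by
        have := Real.one_sub_sq_div_two_le_cos (x := t*x); linarith
      have b2 : 1 - Real.cos (s*x) ≤ (s*x)^2/2 := by
        have := Real.one_sub_sq_div_two_le_cos (x := s*x); linarith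
      have n1 : 0 ≤ 1 - Real.cos (t*x) := by have := Real.cos_le_one (t*x); linarith
      have n2 : 0 ≤ 1 - Real.cos (s*x) := by have := Real.cos_le_one (s*x); linarith
      nlinarith
    have hxabs : |x| = x := abs_of_pos hx0
    rw [hxabs]
    calc (1 - Real.cos (t*x)) * (1 - Real.cos (s*x)) / x ^ (2 + 2*α)
        ≤ ((t^2*s^2/4) * x^(4:ℕ)) / x ^ (2 + 2*α) := by
          exact (div_le_div_iff_of_pos_right hpow).2 hnum
      _ = (t^2*s^2/4) * x ^ (2 - 2*α) := by
          rw [← Real.rpow_natCast x 4, mul_div_assoc, ← Real.rpow_sub hx0,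
            show ((4:ℕ):ℝ) - (2 + 2*α) = 2 - 2*α by push_cast; ring]
  have I2 : IntegrableOn f (Set.Ioi 1) := by
    have base : IntegrableOn (fun x : ℝ => x ^ (-(2 + 2*α))) (Set.Ioi (1:ℝ)) :=
      integrableOn_Ioi_rpow_of_lt (by linarith) zero_lt_one
    apply Integrable.mono' (base.const_mul 4) (hmeas.aestronglyMeasurable.restrict)
    filter_upwards [ae_restrict_mem measurableSet_Ioi] with x hx
    have hx0 : (0:ℝ) < x := lt_trans zero_lt_one hx
    rw [Real.norm_eq_abs, abs_of_nonneg (h_nonneg s t α x)]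
    have hpow : (0:ℝ) < x ^ (2 + 2*α) := Real.rpow_pos_of_pos hx0 _
    have hnum : (1 - Real.cos (t*x)) * (1 - Real.cos (s*x)) ≤ 4 := by
      have := Real.cos_le_one (t*x); have := Real.cos_le_one (s*x)
      have := Real.neg_one_le_cos (t*x); have := Real.neg_one_le_cos (s*x)
      nlinarith
    rw [abs_of_pos hx0]
    calc (1 - Real.cos (t*x)) * (1 - Real.cos (s*x)) / x ^ (2 + 2*α)
        ≤ 4 / x ^ (2 + 2*α) := (div_le_div_iff_of_pos_right hpow).2 hnum
      _ = 4 * x ^ (-(2 + 2*α)) := by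
          rw [Real.rpow_neg hx0.le, div_eq_mul_inv]
  have Ipos : IntegrableOn f (Set.Ioi 0) := by
    rw [← Set.Ioc_union_Ioi_eq_Ioi (zero_le_one (α := ℝ))]
    exact I1.union I2
  have heven : ∀ x : ℝ, f (-x) = f x := by
    intro x; simp only [hf, mul_neg, Real.cos_neg, abs_neg]
  have Ineg : IntegrableOn f (Set.Iio 0) := by
    rw [← (Measure.measurePreserving_neg (volume : Measure ℝ)).integrableOn_comp_preimage
      (Homeomorph.neg ℝ).measurableEmbedding]
    simp only [Function.comp_def, Set.neg_preimage, Set.neg_Iio, neg_zero]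
    exact Ipos.congr_fun (fun x _ => (heven x).symm) measurableSet_Ioi
  rw [← integrableOn_univ, ← Set.Iio_union_Ici (a := (0:ℝ)), integrableOn_union,
    integrableOn_Ici_iff_integrableOn_Ioi]
  exact ⟨Ineg, Ipos⟩

theorem stmt19 (α : ℝ) (hα : α ∈ Set.Ioc (0:ℝ) 2) (hα' : α < 3/2)
    (s t : ℝ) (hs : 0 ≤ s) (ht : 0 ≤ t) :
    Filter.Tendsto
      (fun T : ℝ =>
        ((1 / (2 * Real.pi * T) : ℝ) : ℂ) *
          ∫ x : ℝ, hatF (psiSub s) x * (starRingEnd ℂ) (hatF (psiSub t) x) *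
            ((∫ v in (0:ℝ)..T, ∫ u in v..T, ∫ r in v..T,
                Real.exp (-((u + r - 2*v) * |x| ^ α)) : ℝ) : ℂ))
      Filter.atTop
      (nhds (((2 / Real.pi) *
        ∫ x : ℝ, (1 - Real.cos (t*x)) * (1 - Real.cos (s*x)) / |x| ^ (2 + 2*α) : ℝ)) ) := by
  have hα0 : 0 < α := hα.1
  set h : ℝ → ℝ := fun x => (1 - Real.cos (t*x)) * (1 - Real.cos (s*x)) / |x| ^ (2 + 2*α) with hh
  set P : ℝ → ℝ := fun x => (2 - 2*Real.cos (s*x)) * (2 - 2*Real.cos (t*x)) / x^2 with hP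
  set tripleR : ℝ → ℝ → ℝ := fun T x => ∫ v in (0:ℝ)..T, ∫ u in v..T, ∫ r in v..T,
      Real.exp (-((u + r - 2*v) * |x| ^ α)) with htri
  have hae : ∀ᵐ x : ℝ, x ≠ 0 := by
    have e : {x : ℝ | ¬ x ≠ 0} = {0} := by ext y; simp
    rw [ae_iff, e]; exact measure_singleton 0
  have cpos : ∀ x : ℝ, x ≠ 0 → 0 < |x| ^ α := fun x hx => Real.rpow_pos_of_pos (abs_pos.2 hx) α
  have mc : Measurable (fun x : ℝ => |x| ^ α) :=
    ((Real.continuous_rpow_const hα0.le).comp continuous_abs).measurable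
  -- key pointwise identity
  have habs : ∀ x : ℝ, x ≠ 0 → |x| ^ (2 + 2*α) = x^2 * (|x|^α)^2 := by
    intro x hx
    have e2 : ∀ y : ℝ, 0 ≤ y → y ^ ((2:ℕ):ℝ) = y^(2:ℕ) := fun y hy => Real.rpow_natCast y 2
    rw [show (2 + 2*α : ℝ) = ((2:ℕ):ℝ) + α*((2:ℕ):ℝ) by push_cast; ring,
      Real.rpow_add (abs_pos.2 hx), Real.rpow_mul (abs_nonneg x),
      e2 _ (abs_nonneg x), e2 _ (Real.rpow_nonneg (abs_nonneg x) α), sq_abs]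
  have ident : ∀ T : ℝ, T ≠ 0 → ∀ x : ℝ, x ≠ 0 →
      (1/(2*Real.pi*T)) * (P x * (Aclosed (|x|^α) T / (|x|^α)^2))
        = (2/Real.pi) * h x * (Aclosed (|x|^α) T / T) := by
    intro T hT x hx
    have hc := cpos x hx
    have hpi := Real.pi_pos
    rw [hh, hP]
    simp only
    rw [habs x hx]
    field_simp
  -- DCT
  have main : Tendsto (fun T : ℝ => ∫ x : ℝ, (1/(2*Real.pi*T)) * (P x * tripleR T x))
      atTop (nhds (∫ x : ℝ, (2/Real.pi) * h x)) := by
    apply tendsto_integral_filter_of_dominated_convergence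
      (bound := fun x => (2/Real.pi) * h x)
    · -- measurability
      filter_upwards with T
      have hG : Measurable (fun x : ℝ =>
          (1/(2*Real.pi*T)) * (P x * (Aclosed (|x|^α) T / (|x|^α)^2))) := by
        apply Measurable.const_mul
        apply Measurable.mul
        · apply Measurable.div (by fun_prop) (by fun_prop)
        · apply Measurable.div _ (mc.pow_const 2)
          unfold Aclosed
          fun_prop
      apply hG.aestronglyMeasurable.congr
      filter_upwards [hae] with x hx
      simp only [htri, triple_eq (cpos x hx) T]
    · -- bound
      filter_upwards [eventually_gt_atTop (0:ℝ)] with T hT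
      filter_upwards [hae] with x hx
      have hc := cpos x hx
      rw [htri]
      simp only
      rw [triple_eq hc T, ident T hT.ne' x hx]
      have hhx : 0 ≤ h x := h_nonneg s t α x
      have hpi := Real.pi_pos
      have hA0 : 0 ≤ Aclosed (|x|^α) T := A_nonneg hc hT.le
      have hAT : Aclosed (|x|^α) T / T ≤ 1 := (div_le_one hT).2 (A_le hc hT.le)
      rw [Real.norm_eq_abs, abs_of_nonneg (by positivity)]
      calc (2/Real.pi) * h x * (Aclosed (|x|^α) T / T)
          ≤ (2/Real.pi) * h x * 1 := by
            apply mul_le_mul_of_nonneg_left hAT (by positivity)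
        _ = (2/Real.pi) * h x := by ring
    · exact (h_integrable α s t hα0 hα').const_mul (2/Real.pi)
    · -- pointwise limit
      filter_upwards [hae] with x hx
      have hc := cpos x hx
      apply Tendsto.congr' (f₁ := fun T : ℝ => (2/Real.pi) * h x * (Aclosed (|x|^α) T / T))
      · filter_upwards [eventually_gt_atTop (0:ℝ)] with T hT
        rw [htri]
        simp only
        rw [triple_eq hc T, ident T hT.ne' x hx]
      · simpa using (A_div_tendsto hc).const_mul ((2/Real.pi) * h x)
  have main2 : Tendsto (fun T : ℝ => (1/(2*Real.pi*T)) * ∫ x : ℝ, P x * tripleR T x)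
      atTop (nhds ((2/Real.pi) * ∫ x : ℝ, h x)) := by
    rw [← integral_const_mul]
    exact Tendsto.congr (fun T => integral_const_mul _ _) main
  have final := (Complex.continuous_ofReal.tendsto _).comp main2
  apply final.congr
  intro T
  simp only [Function.comp]
  have hint : (∫ x : ℝ, hatF (psiSub s) x * (starRingEnd ℂ) (hatF (psiSub t) x) *
      ((tripleR T x : ℝ) : ℂ)) = (((∫ x : ℝ, P x * tripleR T x : ℝ)) : ℂ) := by
    have hcast : ∫ x : ℝ, ((P x * tripleR T x : ℝ) : ℂ)
        = (((∫ x : ℝ, P x * tripleR T x : ℝ)) : ℂ) := integral_ofReal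
    rw [← hcast]
    apply integral_congr_ae
    filter_upwards [hae] with x hx
    rw [hatF_prod s t x hs ht hx, ← Complex.ofReal_mul]
  rw [Complex.ofReal_mul, ← hint]
end
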